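/- Let V be an intermediate vertex of a network N with exactly one incoming edge. Then there exists an unambiguous pair (C, F) for (N, A) if and only if there exists an unambiguous pair (C, F') for (N, A) in which the function F'_V : A → A^{|out(V)|} is the replication (routing) map a ↦ (a, a, ..., a). Consequently, the one-shot capacity of N is attained by network codes that use routing at all vertices with in-degree one. -/

import Mathlib

/-- A (single-source multicast) network: a directed multigraph with edge set `E`,
vertex set `V`, tail/head maps, a source `S` and a set of terminals `T`. -/
structure Network (V E : Type) where
  tl : E → V
  hd : E → V
  S : V
  T : Set V

namespace Network

variable {V E A : Type}

/-- The outgoing edges of a vertex. -/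
def outE (N : Network V E) (v : V) : Set E := {e | N.tl e = v}

/-- The incoming edges of a vertex. -/
def inE (N : Network V E) (v : V) : Set E := {e | N.hd e = v}

/-- The network is acyclic: no directed cycle through the vertices. -/
def Acyclic (N : Network V E) : Prop :=
  ∀ v : V, ¬ Relation.TransGen (fun a b : V => ∃ e, N.tl e = a ∧ N.hd e = b) v v

/-- `p` is a (nonempty) directed path of edges from vertex `u` to vertex `v`. -/
def IsPath (N : Network V E) (u v : V) (p : List E) : Prop :=
  p ≠ [] ∧ (∀ e ∈ p.head?, N.tl e = u) ∧ (∀ e ∈ p.getLast?, N.hd e = v) ∧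
    p.Chain' (fun e e' => N.hd e = N.tl e')

/-- A set of edges is a `u`-`v` cut if every directed path from `u` to `v` meets it. -/
def IsCut (N : Network V E) (u v : V) (F : Set E) : Prop :=
  ∀ p : List E, N.IsPath u v p → ∃ e ∈ p, e ∈ F

/-- The minimum size of an edge cut between `u` and `v`. -/
noncomputable def minCut (N : Network V E) (u v : V) : ℕ :=
  sInf {n | ∃ F : Finset E, F.card = n ∧ N.IsCut u v ↑F}

/-- `μ(N)`: the minimum over all terminals of the source-terminal min-cut. -/
noncomputable def mu (N : Network V E) : ℕ :=
  sInf {n | ∃ t ∈ N.T, N.minCut N.S t = n}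

/-- A network code: a local processing function at every vertex, mapping the
incoming alphabet symbols to the outgoing alphabet symbols. -/
def Code (N : Network V E) (A : Type) : Type :=
  ∀ v : V, (N.inE v → A) → (N.outE v → A)

/-- An edge labelling `ℓ` is consistent with the network code `F` and the source
output `s`: the source emits `s`, and each intermediate vertex applies its local rule. -/
def Consistent (N : Network V E) (F : N.Code A) (s : N.outE N.S → A) (ℓ : E → A) : Prop :=
  (∀ e : N.outE N.S, ℓ ↑e = s e) ∧
    ∀ v : V, v ≠ N.S → v ∉ N.T → ∀ e : N.outE v, ℓ ↑e = F v (fun e' => ℓ ↑e') e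

/-- The pair `(C, F)` of an outer code and a network code is unambiguous:
every terminal can uniquely recover the codeword from its incoming symbols. -/
def Unambiguous (N : Network V E) (F : N.Code A) (C : Set (N.outE N.S → A)) : Prop :=
  ∀ t ∈ N.T, ∀ c ∈ C, ∀ c' ∈ C, ∀ ℓ ℓ' : E → A,
    N.Consistent F c ℓ → N.Consistent F c' ℓ' →
      (∀ e : N.inE t, ℓ ↑e = ℓ' ↑e) → c = c'

/-- The one-shot capacity of a network with respect to the alphabet `A`. -/
noncomputable def C1 (N : Network V E) (A : Type) [Fintype A] : ℝ :=
  sSup {x : ℝ | ∃ (C : Set (N.outE N.S → A)) (F : N.Code A),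
    C.Nonempty ∧ N.Unambiguous F C ∧ x = Real.logb (Fintype.card A) C.ncard}

/-- The one-shot linear capacity of a network with respect to the field `A`. -/
noncomputable def C1lin (N : Network V E) (A : Type) [Field A] [Fintype A] : ℝ :=
  sSup {x : ℝ | ∃ (C : Set (N.outE N.S → A)) (F : N.Code A),
    C.Nonempty ∧ (∀ v, IsLinearMap A (F v)) ∧ N.Unambiguous F C ∧
      x = Real.logb (Fintype.card A) C.ncard}

/-- The network obtained by adding a super-source `S' = none` joined to the old
source by `k` parallel edges. -/
def addSuper (N : Network V E) (k : ℕ) : Network (Option V) (E ⊕ Fin k) where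
  tl := Sum.elim (fun e => some (N.tl e)) (fun _ => none)
  hd := Sum.elim (fun e => some (N.hd e)) (fun _ => some N.S)
  S := none
  T := some '' N.T

end Network

open Network

lemma key_lemma {V E A : Type} (N : Network V E) (hacyclic : N.Acyclic)
    (v : V) (hvS : v ≠ N.S) (hvT : v ∉ N.T) (e₀ : E) (he₀ : e₀ ∈ N.inE v)
    (huniq : ∀ e ∈ N.inE v, e = e₀)
    (C : Set (N.outE N.S → A)) (F : N.Code A) (hF : N.Unambiguous F C) :
    ∃ F' : N.Code A, N.Unambiguous F' C ∧
      (∀ (x : N.inE v → A) (e : N.outE v) (e' : N.inE v), F' v x e = x e') ∧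
      (∀ w, w ≠ v → (¬ ∃ e, N.tl e = v ∧ N.hd e = w) → F' w = F w) := by
  classical
  have htl0 : N.tl e₀ ≠ v := fun h =>
    hacyclic v (Relation.TransGen.single ⟨e₀, h, he₀⟩)
  set F' : N.Code A := fun w y e =>
    if hw : w = v then y ⟨e₀, by rw [hw]; exact he₀⟩
    else F w (fun e' => if h : N.tl ↑e' = v then F v (fun _ => y e') ⟨↑e', h⟩ else y e') e
    with hF'
  -- value of a consistent labelling on edges out of v
  have hout : ∀ (m : N.outE N.S → A) (ℓ : E → A), N.Consistent F' m ℓ →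
      ∀ (e : E) (h : N.tl e = v), ℓ e = ℓ e₀ := by
    intro m ℓ hc e h
    refine Eq.trans (hc.2 v hvS hvT ⟨e, h⟩) ?_
    simp only [hF']
    simp
  -- transformation of consistent labellings
  have key2 : ∀ (m : N.outE N.S → A) (ℓ : E → A), N.Consistent F' m ℓ →
      N.Consistent F m (fun e => if h : N.tl e = v then F v (fun _ => ℓ e₀) ⟨e, h⟩ else ℓ e) := by
    intro m ℓ hc
    obtain ⟨h1, h2⟩ := hc
    constructor
    · intro e
      have hne : N.tl ↑e ≠ v := fun h => hvS ((h ▸ e.2 : v = N.S))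
      simp only [dif_neg hne]
      exact h1 e
    · intro w hwS hwT e
      beta_reduce
      by_cases hw : w = v
      · subst hw
        rw [dif_pos (show N.tl (↑e : E) = w from e.2)]
        have harg : (fun e' : N.inE w =>
            if h : N.tl (↑e' : E) = w then F w (fun _ => ℓ e₀) ⟨↑e', h⟩ else ℓ ↑e')
            = fun _ => ℓ e₀ := by
          funext e'
          have hh : (↑e' : E) = e₀ := huniq _ e'.2
          simp only [hh, dif_neg htl0]
        rw [harg]
      · have hne : N.tl ↑e ≠ v := fun h => hw (e.2.symm.trans h)
        simp only [dif_neg hne]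
        rw [h2 w hwS hwT e]
        simp only [hF']
        rw [dif_neg hw]
        congr 1
        funext e'
        by_cases h : N.tl ↑e' = v
        · simp only [dif_pos h, hout m ℓ ⟨h1, h2⟩ ↑e' h]
        · simp only [dif_neg h]
    
  refine ⟨F', ?_, ?_, ?_⟩
  · -- unambiguity
    intro t ht c hc c' hc' ℓ ℓ' hcons hcons' hagree
    refine hF t ht c hc c' hc' _ _ (key2 c ℓ hcons) (key2 c' ℓ' hcons') ?_
    intro e
    by_cases h : N.tl ↑e = v
    · simp only [dif_pos h]
      rw [← hout c ℓ hcons ↑e h, ← hout c' ℓ' hcons' ↑e h, hagree e]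
    · simp only [dif_neg h]
      exact hagree e
  · -- routing at v
    intro x e e'
    simp only [hF']
    rw [dif_pos trivial]
    exact congrArg x (Subtype.ext (huniq ↑e' e'.2).symm)
  · -- unchanged away from v and its successors
    intro w hwv hno
    funext y e
    simp only [hF']
    rw [dif_neg hwv]
    congr 1
    funext e'
    rw [dif_neg (fun h => hno ⟨↑e', h, e'.2⟩)]

lemma fix_all {V E A : Type} [Fintype V] (N : Network V E) (hacyclic : N.Acyclic)
    (D : Finset V) :
    ∀ (C : Set (N.outE N.S → A)) (F : N.Code A), N.Unambiguous F C →
    ∃ F' : N.Code A, N.Unambiguous F' C ∧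
      (∀ w ∈ D, w ≠ N.S → w ∉ N.T → (∃! e, e ∈ N.inE w) →
        ∀ (x : N.inE w → A) (e : N.outE w) (e' : N.inE w), F' w x e = x e') ∧
      (∀ w, w ∉ D →
        (∀ d ∈ D, ¬ Relation.TransGen (fun a b : V => ∃ e, N.tl e = a ∧ N.hd e = b) d w) →
        F' w = F w) := by
  classical
  set R : V → V → Prop := fun a b => ∃ e, N.tl e = a ∧ N.hd e = b with hR
  haveI : IsTrans V (Relation.TransGen R) := ⟨fun _ _ _ => Relation.TransGen.trans⟩
  haveI : IsIrrefl V (Relation.TransGen R) := ⟨hacyclic⟩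
  have wf : WellFounded (Relation.TransGen R) :=
    Finite.wellFounded_of_trans_of_irrefl _
  induction D using Finset.strongInduction with
  | _ D ih =>
    intro C F hF
    rcases D.eq_empty_or_nonempty with hD | hD
    · subst hD
      exact ⟨F, hF, by simp, fun w _ _ => rfl⟩
    · have hDne : (↑D : Set V).Nonempty := by exact_mod_cast hD
      set v : V := wf.min ↑D hDne with hv
      have hvD : v ∈ D := wf.min_mem ↑D hDne
      have hmin : ∀ d ∈ D, ¬ Relation.TransGen R d v := fun d hd =>
        wf.not_lt_min ↑D (by exact_mod_cast hd)
      by_cases hrel : v ≠ N.S ∧ v ∉ N.T ∧ ∃! e, e ∈ N.inE v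
      · obtain ⟨hvS, hvT, e₀, he₀, hu⟩ := hrel
        obtain ⟨F₁, hF₁, hroute₁, hunch₁⟩ :=
          key_lemma N hacyclic v hvS hvT e₀ he₀ hu C F hF
        obtain ⟨F', hF', hroute', hunch'⟩ :=
          ih (D.erase v) (Finset.erase_ssubset hvD) C F₁ hF₁
        refine ⟨F', hF', ?_, ?_⟩
        · intro w hw hwS hwT hdw
          by_cases hwv : w = v
          · subst hwv
            have h1 : F' v = F₁ v := hunch' _ (Finset.notMem_erase _ _)
              (fun d hd => hmin d (Finset.mem_of_mem_erase hd))
            rw [h1]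
            exact hroute₁
          · exact hroute' w (Finset.mem_erase.mpr ⟨hwv, hw⟩) hwS hwT hdw
        · intro w hw hall
          have h1 : F' w = F₁ w := hunch' w (fun h => hw (Finset.mem_of_mem_erase h))
            (fun d hd => hall d (Finset.mem_of_mem_erase hd))
          have h2 : F₁ w = F w := hunch₁ w (fun h => hw (h ▸ hvD))
            (fun ⟨e, h1', h2'⟩ => hall v hvD (Relation.TransGen.single ⟨e, h1', h2'⟩))
          rw [h1, h2]
      · obtain ⟨F', hF', hroute', hunch'⟩ :=
          ih (D.erase v) (Finset.erase_ssubset hvD) C F hF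
        refine ⟨F', hF', ?_, ?_⟩
        · intro w hw hwS hwT hdw
          by_cases hwv : w = v
          · exact absurd ⟨hwv ▸ hwS, hwv ▸ hwT, hwv ▸ hdw⟩ hrel
          · exact hroute' w (Finset.mem_erase.mpr ⟨hwv, hw⟩) hwS hwT hdw
        · intro w hw hall
          exact hunch' w (fun h => hw (Finset.mem_of_mem_erase h))
            (fun d hd => hall d (Finset.mem_of_mem_erase hd))

open Network in
/-- Routing trick: if an intermediate vertex `v` has exactly one incoming edge,
then an unambiguous pair `(C, F)` exists iff an unambiguous pair `(C, F')` exists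
in which `F'_v` is the replication (routing) map. Consequently, the one-shot
capacity is attained by a network code that uses routing at all intermediate
vertices with in-degree one. -/
theorem routing_trick {V E A : Type} [Fintype V] [Fintype E] [Fintype A]
    (N : Network V E) (hA : 2 ≤ Fintype.card A) (hacyclic : N.Acyclic)
    (v : V) (hvS : v ≠ N.S) (hvT : v ∉ N.T) (hdeg : ∃! e, e ∈ N.inE v) :
    (∀ C : Set (N.outE N.S → A), C.Nonempty →
      ((∃ F : N.Code A, N.Unambiguous F C) ↔
        (∃ F : N.Code A, N.Unambiguous F C ∧
          ∀ (x : N.inE v → A) (e : N.outE v) (e' : N.inE v), F v x e = x e'))) ∧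
    (∃ (C : Set (N.outE N.S → A)) (F : N.Code A), C.Nonempty ∧ N.Unambiguous F C ∧
      (∀ w : V, w ≠ N.S → w ∉ N.T → (∃! e, e ∈ N.inE w) →
        ∀ (x : N.inE w → A) (e : N.outE w) (e' : N.inE w), F w x e = x e') ∧
      Real.logb (Fintype.card A) C.ncard = N.C1 A) := by
  classical
  obtain ⟨e₀, he₀, hu⟩ := hdeg
  constructor
  · intro C _
    constructor
    · rintro ⟨F, hF⟩
      obtain ⟨F', h1, h2, -⟩ := key_lemma N hacyclic v hvS hvT e₀ he₀ hu C F hF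
      exact ⟨F', h1, h2⟩
    · rintro ⟨F, hF, -⟩
      exact ⟨F, hF⟩
  · have hAne : Nonempty A := Fintype.card_pos_iff.mp (by omega)
    obtain ⟨a⟩ := hAne
    set Ω : Set ℝ := {x : ℝ | ∃ (C : Set (N.outE N.S → A)) (F : N.Code A),
      C.Nonempty ∧ N.Unambiguous F C ∧ x = Real.logb (Fintype.card A) C.ncard} with hΩ
    have hC1 : N.C1 A = sSup Ω := rfl
    have hne : Ω.Nonempty := by
      refine ⟨_, {fun _ => a}, fun w y e => a, Set.singleton_nonempty _, ?_, rfl⟩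
      intro t ht c hc c' hc' _ _ _ _ _
      rw [Set.mem_singleton_iff] at hc hc'
      rw [hc, hc']
    have hfin : Ω.Finite := by
      have hsub : Ω ⊆ Set.range (fun C : Set (N.outE N.S → A) =>
          Real.logb (Fintype.card A) C.ncard) := by
        rintro x ⟨C, F, -, -, rfl⟩
        exact ⟨C, rfl⟩
      exact (Set.finite_range _).subset hsub
    have hmem : sSup Ω ∈ Ω := hne.csSup_mem hfin
    obtain ⟨C, F, hCne, hF, hx⟩ := hmem
    obtain ⟨F', hF', hroute', -⟩ := fix_all N hacyclic Finset.univ C F hF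
    refine ⟨C, F', hCne, hF',
      fun w hwS hwT hdw => hroute' w (Finset.mem_univ w) hwS hwT hdw, ?_⟩
    rw [hC1]
    exact hx.symm
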